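/- Define k(ℓ) = h_ℓ(0) where h_ℓ(y) = 120·ℓ·(p²/2)·((1−p)³/6 − (ℓ−1)(p²/2)(1−2p) − (ℓ−1)p³/6) with p = (1−y)/ℓ. Then for real ℓ ≥ 9, k'(ℓ) = −10·j(ℓ)/ℓ⁵ where j(ℓ) = (ℓ−9)³ + 15(ℓ−9)² + 60(ℓ−9) + 30 > 0; hence k is strictly decreasing on [9, ∞). Moreover k(9) = 1120/2187 < 525/1024 = k(8). -/

import Mathlib

/-- `k(ℓ) = h_ℓ(0)`, where `h_ℓ(y)` is the `K_{2,1,1,1}`-density of the complete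
partite graph with `ℓ` equal independent parts of ratio `p = (1−y)/ℓ` and a clique
part of ratio `y`; here specialised to `y = 0`, i.e. `p = 1/ℓ`. -/
noncomputable def kfun (l : ℝ) : ℝ :=
  120 * l * ((1/l)^2/2) *
    ((1 - 1/l)^3/6 - (l-1) * ((1/l)^2/2) * (1 - 2*(1/l)) - (l-1) * (1/l)^3/6)

lemma kfun_eq {l : ℝ} (hl : l ≠ 0) :
    kfun l = (10*l^3 - 60*l^2 + 110*l - 60) / l^4 := by
  unfold kfun
  field_simp
  ring

lemma kfun_hasDerivAt {l : ℝ} (hl : l ≠ 0) :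
    HasDerivAt kfun (-10 * (l^3 - 12*l^2 + 33*l - 24) / l^5) l := by
  have h4 : (l:ℝ)^4 ≠ 0 := pow_ne_zero _ hl
  have hf : HasDerivAt (fun x : ℝ => 10*x^3 - 60*x^2 + 110*x - 60)
      (30*l^2 - 120*l + 110) l := by
    have := (((hasDerivAt_pow 3 l).const_mul 10).sub
        ((hasDerivAt_pow 2 l).const_mul 60)).add
        ((hasDerivAt_id l).const_mul 110)
    have h := this.sub_const 60
    refine (h.congr_deriv ?_).congr_of_eventuallyEq (Filter.Eventually.of_forall fun x => ?_)
    push_cast; ring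
    simp only [Pi.add_apply, Pi.sub_apply, id]
  have hg : HasDerivAt (fun x : ℝ => x^4) (4*l^3) l := by
    simpa using hasDerivAt_pow 4 l
  have hdiv := hf.div hg h4
  have heq : HasDerivAt (fun x : ℝ => (10*x^3 - 60*x^2 + 110*x - 60) / x^4)
      (-10 * (l^3 - 12*l^2 + 33*l - 24) / l^5) l := by
    refine (hdiv.congr_deriv ?_).congr_of_eventuallyEq Filter.EventuallyEq.rfl
    field_simp
    ring
  have hev : kfun =ᶠ[nhds l] fun x : ℝ => (10*x^3 - 60*x^2 + 110*x - 60) / x^4 := by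
    filter_upwards [isOpen_ne.mem_nhds hl] with x hx
    exact kfun_eq hx
  exact heq.congr_of_eventuallyEq hev

lemma kfun_deriv {l : ℝ} (hl : l ≠ 0) :
    deriv kfun l = -10 * (l^3 - 12*l^2 + 33*l - 24) / l^5 :=
  (kfun_hasDerivAt hl).deriv

theorem stmt_17 :
    (∀ l : ℝ, 9 ≤ l →
      deriv kfun l = -10 * ((l-9)^3 + 15*(l-9)^2 + 60*(l-9) + 30) / l^5 ∧
      0 < (l-9)^3 + 15*(l-9)^2 + 60*(l-9) + 30) ∧
    StrictAntiOn kfun (Set.Ici (9:ℝ)) ∧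
    kfun 9 = 1120/2187 ∧ kfun 8 = 525/1024 ∧ (1120/2187 : ℝ) < 525/1024 := by
  have hpos : ∀ l : ℝ, 9 ≤ l → 0 < (l-9)^3 + 15*(l-9)^2 + 60*(l-9) + 30 := by
    intro l hl; nlinarith [sq_nonneg (l-9), pow_le_pow_left₀ (by linarith : (0:ℝ) ≤ 0) (by linarith : (0:ℝ) ≤ l-9) 3]
  refine ⟨fun l hl => ⟨?_, hpos l hl⟩, ?_, ?_, ?_, by norm_num⟩
  · have hne : l ≠ 0 := by linarith
    rw [kfun_deriv hne]; ring_nf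
  · apply strictAntiOn_of_deriv_neg (convex_Ici 9)
    · apply ContinuousOn.congr (f := fun x : ℝ => (10*x^3 - 60*x^2 + 110*x - 60) / x^4)
      · apply ContinuousOn.div (by fun_prop) (by fun_prop)
        intro x hx
        simp only [Set.mem_Ici] at hx
        positivity
      · intro x hx
        simp only [Set.mem_Ici] at hx
        exact kfun_eq (by linarith)
    · intro x hx
      rw [interior_Ici] at hx
      simp only [Set.mem_Ioi] at hx
      have hne : x ≠ 0 := by linarith
      rw [kfun_deriv hne]
      have h1 : 0 < x^3 - 12*x^2 + 33*x - 24 := by nlinarith [hpos x (le_of_lt hx)]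
      have h5 : 0 < x^5 := by positivity
      have : -10 * (x^3 - 12*x^2 + 33*x - 24) < 0 := by linarith
      exact div_neg_of_neg_of_pos this h5
  · rw [kfun_eq (by norm_num : (9:ℝ) ≠ 0)]; norm_num
  · rw [kfun_eq (by norm_num : (8:ℝ) ≠ 0)]; norm_num
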